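/- Let A ∈ ℝ^{n×n}, C ∈ ℝ^{m×n}, let s ≥ 1 and k ≥ 0 be integers, and let κ > 0. Suppose that ‖O_s v‖ ≥ (1/κ)‖v‖ for every v ∈ ℝ^n, where O_s is the order-s observability matrix. Then there exist matrices α_1, …, α_s ∈ ℝ^{m×m} with ‖α_j‖_F ≤ κ · ‖C A^{k+s}‖_F for every j, such that C A^{k+s} = α_1 C A^{s−1} + α_2 C A^{s−2} + ⋯ + α_s C. -/

import Mathlib

/-- Euclidean norm of a real vector. -/
noncomputable def enormR {ι : Type*} [Fintype ι] (v : ι → ℝ) : ℝ :=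
  Real.sqrt (∑ i, (v i) ^ 2)

/-- Frobenius norm of a real matrix. -/
noncomputable def frobR {ι κ : Type*} [Fintype ι] [Fintype κ] (M : Matrix ι κ ℝ) : ℝ :=
  Real.sqrt (∑ i, ∑ j, (M i j) ^ 2)

/-- The order-`s` observability matrix `O_s = [C; CA; CA²; …; CA^{s−1}]` (row blocks indexed by
`Fin s`). -/
def obsMatR (n m s : ℕ) (A : Matrix (Fin n) (Fin n) ℝ)
    (C : Matrix (Fin m) (Fin n) ℝ) : Matrix (Fin s × Fin m) (Fin n) ℝ :=
  fun ir j => (C * A ^ (ir.1 : ℕ)) ir.2 j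

open Matrix

/-- If the smallest singular value of the order-`s` observability matrix `O_s`
is at least `1/κ` (i.e. `‖O_s v‖ ≥ (1/κ) ‖v‖` for all `v`), then for any `k ≥ 0` there exist
matrices `α₁, …, α_s ∈ ℝ^{m×m}` with `‖α_j‖_F ≤ κ ‖C A^{k+s}‖_F` for every `j`, such that
`C A^{k+s} = α₁ C A^{s−1} + α₂ C A^{s−2} + ⋯ + α_s C`. -/
theorem stabilizing_coefficients_exist (n m : ℕ)
    (A : Matrix (Fin n) (Fin n) ℝ) (C : Matrix (Fin m) (Fin n) ℝ)
    (s k : ℕ) (hs : 1 ≤ s) (κ : ℝ) (hκ : 0 < κ)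
    (hmin : ∀ v : Fin n → ℝ, (1 / κ) * enormR v ≤ enormR ((obsMatR n m s A C).mulVec v)) :
    ∃ α : ℕ → Matrix (Fin m) (Fin m) ℝ,
      (∀ j ∈ Finset.Icc 1 s, frobR (α j) ≤ κ * frobR (C * A ^ (k + s))) ∧
      C * A ^ (k + s) = ∑ j ∈ Finset.Icc 1 s, α j * C * A ^ (s - j) := by
  classical
  set O : Matrix (Fin s × Fin m) (Fin n) ℝ := obsMatR n m s A C with hOdef
  set M : Matrix (Fin m) (Fin n) ℝ := C * A ^ (k + s) with hMdef
  set G : Matrix (Fin n) (Fin n) ℝ := Oᵀ * O with hGdef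
  -- quadratic form of G
  have hquad : ∀ v : Fin n → ℝ, v ⬝ᵥ G *ᵥ v = ∑ p, (O *ᵥ v) p ^ 2 := by
    intro v
    rw [hGdef, ← Matrix.mulVec_mulVec, Matrix.dotProduct_mulVec, Matrix.vecMul_transpose]
    simp [dotProduct, sq]
  have hlow : ∀ v : Fin n → ℝ, (1 / κ) ^ 2 * (∑ i, v i ^ 2) ≤ v ⬝ᵥ G *ᵥ v := by
    intro v
    have h1 := hmin v
    have h0 : (0 : ℝ) ≤ (1 / κ) * enormR v := by
      apply mul_nonneg (by positivity)
      exact Real.sqrt_nonneg _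
    have h2 : ((1 / κ) * enormR v) ^ 2 ≤ (enormR (O *ᵥ v)) ^ 2 := by
      exact pow_le_pow_left₀ h0 h1 2
    rw [mul_pow] at h2
    have e1 : enormR v ^ 2 = ∑ i, v i ^ 2 := Real.sq_sqrt (by positivity)
    have e2 : enormR (O *ᵥ v) ^ 2 = ∑ p, (O *ᵥ v) p ^ 2 := Real.sq_sqrt (by positivity)
    rw [e1, e2] at h2
    rw [hquad]
    exact h2
  -- G is positive definite, hence invertible
  have hGsymm : Gᵀ = G := by
    rw [hGdef, Matrix.transpose_mul, Matrix.transpose_transpose]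
  have hpd : G.PosDef := by
    rw [Matrix.posDef_iff_dotProduct_mulVec]
    constructor
    · show Gᴴ = G
      have : Gᴴ = Gᵀ := by ext a b; simp [Matrix.conjTranspose_apply]
      rw [this, hGsymm]
    · intro x hx
      have hstar : star x = x := by funext i; simp
      rw [hstar]
      have hxsum : 0 < ∑ i, x i ^ 2 := by
        rcases Function.ne_iff.mp hx with ⟨i, hi⟩
        have : 0 < x i ^ 2 := lt_of_le_of_ne (sq_nonneg _) (Ne.symm (pow_ne_zero 2 hi))
        exact this.trans_le (Finset.single_le_sum (fun j _ => sq_nonneg (x j))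
          (Finset.mem_univ i))
      have := hlow x
      have hpos : 0 < (1 / κ) ^ 2 * ∑ i, x i ^ 2 := by positivity
      exact hpos.trans_le this
  have hdet : IsUnit G.det := hpd.det_pos.ne'.isUnit
  have hGinvG : G⁻¹ * G = 1 := Matrix.nonsing_inv_mul G hdet
  have hGGinv : G * G⁻¹ = 1 := Matrix.mul_nonsing_inv G hdet
  have hGinvSym : G⁻¹ᵀ = G⁻¹ := by
    rw [Matrix.transpose_nonsing_inv, hGsymm]
  have hGinvSym' : ∀ a b, G⁻¹ a b = G⁻¹ b a := by
    intro a b; conv_lhs => rw [← hGinvSym]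
    rw [Matrix.transpose_apply]
  -- the coefficient matrix
  set β : Matrix (Fin m) (Fin s × Fin m) ℝ := M * G⁻¹ * Oᵀ with hβdef
  have hβO : β * O = M := by
    rw [hβdef, Matrix.mul_assoc (M * G⁻¹), ← hGdef, Matrix.mul_assoc, hGinvG, Matrix.mul_one]
  -- row-wise norm bound
  have hrowbound : ∀ r : Fin m, ∑ p, β r p ^ 2 ≤ κ ^ 2 * ∑ c, M r c ^ 2 := by
    intro r
    set w : Fin n → ℝ := M r with hw
    set v : Fin n → ℝ := G⁻¹ *ᵥ w with hv
    have hβrow : ∀ p, β r p = (O *ᵥ v) p := by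
      intro p
      show (M * G⁻¹ * Oᵀ) r p = _
      simp only [Matrix.mul_apply, Matrix.mulVec, dotProduct, Matrix.transpose_apply,
        hv, hw, Finset.sum_mul, Finset.mul_sum]
      refine Finset.sum_congr rfl fun j _ => Finset.sum_congr rfl fun c _ => ?_
      rw [hGinvSym' c j]; ring
    have hGv : G *ᵥ v = w := by
      rw [hv, Matrix.mulVec_mulVec, hGGinv, Matrix.one_mulVec]
    have hsq : ∑ p, β r p ^ 2 = v ⬝ᵥ w := by
      simp_rw [hβrow]
      rw [← hquad v, hGv]
    have ht0 : (1 / κ) ^ 2 * (∑ i, v i ^ 2) ≤ v ⬝ᵥ w := by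
      have := hlow v
      rwa [hGv] at this
    have hCS : (v ⬝ᵥ w) ^ 2 ≤ (∑ i, v i ^ 2) * (∑ c, w c ^ 2) := by
      simpa [dotProduct] using
        Finset.sum_mul_sq_le_sq_mul_sq Finset.univ v w
    have hSw : (0 : ℝ) ≤ ∑ c, w c ^ 2 := Finset.sum_nonneg fun c _ => sq_nonneg _
    have hSv : (0 : ℝ) ≤ ∑ i, v i ^ 2 := Finset.sum_nonneg fun i _ => sq_nonneg _
    rw [hsq]
    have h1 : ∑ i, v i ^ 2 ≤ κ ^ 2 * (v ⬝ᵥ w) := by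
      have := mul_le_mul_of_nonneg_left ht0 (le_of_lt (by positivity : (0:ℝ) < κ ^ 2))
      calc ∑ i, v i ^ 2 = κ ^ 2 * ((1 / κ) ^ 2 * ∑ i, v i ^ 2) := by
            field_simp
        _ ≤ κ ^ 2 * (v ⬝ᵥ w) := this
    rcases le_or_gt (v ⬝ᵥ w) 0 with ht | ht
    · exact ht.trans (by positivity)
    · have h2 : (v ⬝ᵥ w) ^ 2 ≤ (κ ^ 2 * (v ⬝ᵥ w)) * (∑ c, w c ^ 2) :=
        hCS.trans (mul_le_mul_of_nonneg_right h1 hSw)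
      have h3 : (v ⬝ᵥ w) * (v ⬝ᵥ w) ≤ (κ ^ 2 * (∑ c, w c ^ 2)) * (v ⬝ᵥ w) := by
        nlinarith
      exact le_of_mul_le_mul_right h3 ht
  -- Frobenius norm bound for β
  have hβfrob : frobR β ≤ κ * frobR M := by
    have h1 : ∑ r, ∑ p, β r p ^ 2 ≤ κ ^ 2 * ∑ r, ∑ c, M r c ^ 2 := by
      rw [Finset.mul_sum]
      exact Finset.sum_le_sum fun r _ => hrowbound r
    calc frobR β = Real.sqrt (∑ r, ∑ p, β r p ^ 2) := rfl
      _ ≤ Real.sqrt (κ ^ 2 * ∑ r, ∑ c, M r c ^ 2) := Real.sqrt_le_sqrt h1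
      _ = κ * frobR M := by
          rw [Real.sqrt_mul (sq_nonneg κ), Real.sqrt_sq hκ.le]; rfl
  -- the α matrices
  have hidx : ∀ j ∈ Finset.Icc 1 s, s - j < s := by
    intro j hj
    rw [Finset.mem_Icc] at hj
    omega
  refine ⟨fun j => if h : j ∈ Finset.Icc 1 s then
      Matrix.of (fun r c => β r (⟨s - j, hidx j h⟩, c)) else 0, ?_, ?_⟩
  · -- norm bounds
    intro j hj
    simp only [dif_pos hj]
    set i0 : Fin s := ⟨s - j, hidx j hj⟩ with hi0
    have hsub : ∀ r, ∑ c, β r (i0, c) ^ 2 ≤ ∑ p, β r p ^ 2 := by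
      intro r
      rw [Fintype.sum_prod_type]
      exact Finset.single_le_sum (f := fun i => ∑ q, β r (i, q) ^ 2)
        (fun i _ => Finset.sum_nonneg fun q _ => sq_nonneg _) (Finset.mem_univ i0)
    have : frobR (Matrix.of (fun r c => β r (i0, c))) ≤ frobR β := by
      apply Real.sqrt_le_sqrt
      exact Finset.sum_le_sum fun r _ => hsub r
    exact this.trans hβfrob
  · -- the identity
    rw [← hβO]
    ext r c
    rw [Matrix.mul_apply, Matrix.sum_apply, Fintype.sum_prod_type]
    refine Finset.sum_nbij' (fun i : Fin s => s - (i : ℕ))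
      (fun jj : ℕ => if h : s - jj < s then (⟨s - jj, h⟩ : Fin s) else ⟨0, hs⟩)
      ?_ ?_ ?_ ?_ ?_
    · intro i _
      have hi := i.isLt
      simp only [Finset.mem_Icc]
      omega
    · intro jj _
      exact Finset.mem_univ _
    · intro i _
      have hi := i.isLt
      have h1 : s - (s - (i : ℕ)) < s := by omega
      simp only [dif_pos h1]
      exact Fin.ext (by omega : s - (s - (i : ℕ)) = (i : ℕ))
    · intro jj hjj
      rw [Finset.mem_Icc] at hjj
      have h1 : s - jj < s := by omega
      simp only [dif_pos h1]
      omega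
    · intro i _
      have hmem : s - (i : ℕ) ∈ Finset.Icc 1 s := by
        rw [Finset.mem_Icc]; omega
      simp only [dif_pos hmem]
      have hii : s - (s - (i : ℕ)) = (i : ℕ) := by omega
      have hfin : (⟨s - (s - (i : ℕ)), hidx _ hmem⟩ : Fin s) = i := by
        ext; exact hii
      rw [Matrix.mul_assoc, Matrix.mul_apply]
      refine Finset.sum_congr rfl fun q _ => ?_
      rw [hfin, hii]
      rfl
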